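/- MFM partition distribution: under the mixture-of-finite-mixtures model with K ~ p_K, (π₁,...,π_K)|K ~ Dirichlet(γ,...,γ), and z_i | K, π i.i.d. categorical with probabilities π, the induced distribution on the partition C of {1,...,n} is p(C) = V_n(t) ∏_{c∈C} γ^{(|c|)}, where t = |C|, V_n(t) = Σ_{k=1}^∞ k_{(t)}/(γk)^{(n)} · p_K(k), x^{(m)} = x(x+1)⋯(x+m−1), and x_{(m)} = x(x−1)⋯(x−m+1). -/
import Mathlib


/-- Ascending factorial `x^{(m)} = x (x+1) ⋯ (x+m−1)` for a real `x`. -/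
def ascFac (x : ℝ) (m : ℕ) : ℝ := ∏ i ∈ Finset.range m, (x + i)

/-- Descending factorial `k_{(t)} = k (k−1) ⋯ (k−t+1)` for a natural `k`, as a real. -/
def descFac (k : ℕ) (t : ℕ) : ℝ := ∏ i ∈ Finset.range t, ((k : ℝ) - i)

/-- The set partition of `{1,...,n}` induced by a labeling `z : Fin n → Fin k`:
the collection of nonempty fibers of `z`. -/
def partOf {n k : ℕ} (z : Fin n → Fin k) : Finset (Finset (Fin n)) :=
  (Finset.univ.image (fun h : Fin k => Finset.univ.filter (fun i => z i = h))).erase ∅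

lemma descFac_eq_descFactorial (k t : ℕ) : descFac k t = (k.descFactorial t : ℝ) := by
  induction t with
  | zero => simp [descFac]
  | succ t ih =>
    rw [descFac, Finset.prod_range_succ, ← descFac, ih, Nat.descFactorial_succ]
    rcases le_or_gt t k with h | h
    · rw [Nat.cast_mul, Nat.cast_sub h]; ring
    · rw [Nat.descFactorial_eq_zero_iff_lt.mpr h]; simp

lemma partOf_mem {n k : ℕ} (z : Fin n → Fin k) (c : Finset (Fin n)) :
    c ∈ partOf z ↔ c.Nonempty ∧ ∃ h, c = Finset.univ.filter (fun i => z i = h) := by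
  constructor
  · intro hc
    rw [partOf, Finset.mem_erase, Finset.mem_image] at hc
    obtain ⟨hne', h, _, hh⟩ := hc
    exact ⟨Finset.nonempty_iff_ne_empty.mpr hne', h, hh.symm⟩
  · rintro ⟨hcne, h, rfl⟩
    rw [partOf, Finset.mem_erase, Finset.mem_image]
    exact ⟨Finset.nonempty_iff_ne_empty.mp hcne, h, Finset.mem_univ h, rfl⟩

/-- MFM partition distribution: under `K ~ p_K`, `(π₁,...,π_K) | K ~ Dirichlet(γ,...,γ)`,
and `z_i | K, π` i.i.d. categorical (so that, after integrating out `π`, a labeling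
`z : Fin n → Fin k` has probability `∏_h γ^{(n_h)} / (γ k)^{(n)}` by the
Dirichlet–multinomial identity), the induced probability of the partition `C` of
`{1,...,n}` is `p(C) = V_n(t) ∏_{c ∈ C} γ^{(|c|)}`, where `t = |C|` and
`V_n(t) = Σ_k k_{(t)} / (γ k)^{(n)} p_K(k)`. -/
theorem MFM_partition_distribution
    (γ : ℝ) (hγ : 0 < γ) (n : ℕ) (hn : 1 ≤ n)
    (pK : ℕ → ℝ) (hpK_nonneg : ∀ k, 0 ≤ pK k) (hpK_zero : pK 0 = 0)
    (hpK_sum : HasSum pK 1)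
    (C : Finset (Finset (Fin n)))
    (hne : ∀ c ∈ C, c.Nonempty)
    (hdisj : ∀ c ∈ C, ∀ c' ∈ C, c ≠ c' → Disjoint c c')
    (hcov : ∀ i : Fin n, ∃ c ∈ C, i ∈ c) :
    (∑' k : ℕ, pK k *
        ∑ z ∈ Finset.univ.filter (fun z : Fin n → Fin k => partOf z = C),
          (∏ h : Fin k, ascFac γ (Finset.univ.filter (fun i => z i = h)).card) /
            ascFac (γ * k) n)
      = (∑' k : ℕ, descFac k C.card / ascFac (γ * k) n * pK k) *
          ∏ c ∈ C, ascFac γ c.card := by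
  have hblk : ∀ i : Fin n, ∃! c, c ∈ C ∧ i ∈ c := by
    intro i
    obtain ⟨c, hc, hic⟩ := hcov i
    refine ⟨c, ⟨hc, hic⟩, ?_⟩
    rintro c' ⟨hc', hic'⟩
    by_contra hne'
    exact (Finset.disjoint_left.mp (hdisj c' hc' c hc hne') hic') hic
  set blk : Fin n → Finset (Fin n) := fun i => (hblk i).choose with hblkdef
  have blk_mem : ∀ i, blk i ∈ C := fun i => ((hblk i).choose_spec.1).1
  have mem_blk : ∀ i, i ∈ blk i := fun i => ((hblk i).choose_spec.1).2
  have blk_unique : ∀ i c, c ∈ C → i ∈ c → c = blk i :=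
    fun i c hc hic => (hblk i).choose_spec.2 c ⟨hc, hic⟩
  rw [← tsum_mul_right]
  refine tsum_congr fun k => ?_
  -- for z inducing C, each block equals the fiber of any of its points
  have fib_eq : ∀ (z : Fin n → Fin k), partOf z = C → ∀ c ∈ C, ∀ i ∈ c,
      c = Finset.univ.filter (fun j => z j = z i) := by
    intro z hz c hc i hi
    rw [← hz, partOf_mem] at hc
    obtain ⟨-, h, rfl⟩ := hc
    have hzi : z i = h := (Finset.mem_filter.mp hi).2
    rw [hzi]
  -- (A) the summand is constant over labelings inducing C
  have hA : ∀ z ∈ Finset.univ.filter (fun z : Fin n → Fin k => partOf z = C),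
      (∏ h : Fin k, ascFac γ (Finset.univ.filter (fun i => z i = h)).card)
        = ∏ c ∈ C, ascFac γ c.card := by
    intro z hz
    rw [Finset.mem_filter] at hz
    have hz' := hz.2
    rw [← Finset.prod_subset
      (Finset.subset_univ (Finset.univ.filter
        (fun h : Fin k => (Finset.univ.filter (fun i => z i = h)).Nonempty)))
      (by
        intro h _ hhS
        have hempty : (Finset.univ.filter (fun i => z i = h)) = ∅ := by
          rw [← Finset.not_nonempty_iff_eq_empty]
          intro hne''
          exact hhS (Finset.mem_filter.mpr ⟨Finset.mem_univ h, hne''⟩)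
        simp [hempty, ascFac])]
    refine Finset.prod_bij
      (fun h _ => Finset.univ.filter (fun i => z i = h)) ?_ ?_ ?_ ?_
    · intro h hh
      rw [Finset.mem_filter] at hh
      rw [← hz', partOf_mem]
      exact ⟨hh.2, h, rfl⟩
    · intro h₁ hh₁ h₂ hh₂ heq
      rw [Finset.mem_filter] at hh₁
      obtain ⟨i, hi⟩ := hh₁.2
      have heq' : Finset.univ.filter (fun i => z i = h₁)
          = Finset.univ.filter (fun i => z i = h₂) := heq
      have hi₂ : i ∈ Finset.univ.filter (fun j => z j = h₂) := heq' ▸ hi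
      have e₁ : z i = h₁ := (Finset.mem_filter.mp hi).2
      have e₂ : z i = h₂ := (Finset.mem_filter.mp hi₂).2
      rw [← e₁, ← e₂]
    · intro c hc
      rw [← hz', partOf_mem] at hc
      obtain ⟨hcne, h, rfl⟩ := hc
      exact ⟨h, Finset.mem_filter.mpr ⟨Finset.mem_univ h, hcne⟩, rfl⟩
    · intro h hh
      rfl
  -- (B) the number of labelings inducing C is k_(t)
  have hB : (Finset.univ.filter (fun z : Fin n → Fin k => partOf z = C)).card
      = k.descFactorial C.card := by
    have hcard : (Finset.univ.filter (fun z : Fin n → Fin k => partOf z = C)).card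
        = (Finset.univ : Finset (↥C ↪ Fin k)).card := by
      refine Finset.card_bij'
        (i := fun z hz => ⟨fun c => z ((hne c.1 c.2).choose), by
          have hz' : partOf z = C := (Finset.mem_filter.mp hz).2
          intro c₁ c₂ heq
          have h₁ := fib_eq z hz' c₁.1 c₁.2 _ (hne c₁.1 c₁.2).choose_spec
          have h₂ := fib_eq z hz' c₂.1 c₂.2 _ (hne c₂.1 c₂.2).choose_spec
          have heq' : z ((hne c₁.1 c₁.2).choose) = z ((hne c₂.1 c₂.2).choose) := heq
          apply Subtype.ext
          rw [h₁, h₂, heq']⟩)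
        (j := fun g _ => fun i => g ⟨blk i, blk_mem i⟩) ?_ ?_ ?_ ?_
      · intro z hz; exact Finset.mem_univ _
      · -- backward map lands in the filter
        intro g _
        rw [Finset.mem_filter]
        refine ⟨Finset.mem_univ _, ?_⟩
        ext c
        rw [partOf_mem]
        constructor
        · rintro ⟨⟨i, hi⟩, h, rfl⟩
          have hzi : g ⟨blk i, blk_mem i⟩ = h := (Finset.mem_filter.mp hi).2
          have : Finset.univ.filter (fun j => g ⟨blk j, blk_mem j⟩ = h) = blk i := by
            ext j
            simp only [Finset.mem_filter, Finset.mem_univ, true_and]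
            constructor
            · intro hj
              have : (⟨blk j, blk_mem j⟩ : ↥C) = ⟨blk i, blk_mem i⟩ :=
                g.injective (by rw [hj, hzi])
              have hbl : blk j = blk i := congrArg Subtype.val this
              exact hbl ▸ mem_blk j
            · intro hj
              have hbl : blk i = blk j := blk_unique j (blk i) (blk_mem i) hj
              have e : (⟨blk j, blk_mem j⟩ : ↥C) = ⟨blk i, blk_mem i⟩ :=
                Subtype.ext hbl.symm
              rw [e]
              exact hzi
          rw [this]
          exact blk_mem i
        · intro hc
          refine ⟨hne c hc, g ⟨c, hc⟩, ?_⟩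
          ext j
          simp only [Finset.mem_filter, Finset.mem_univ, true_and]
          constructor
          · intro hj
            have hbl : c = blk j := blk_unique j c hc hj
            have e : (⟨blk j, blk_mem j⟩ : ↥C) = ⟨c, hc⟩ := Subtype.ext hbl.symm
            rw [e]
          · intro hj
            have : (⟨blk j, blk_mem j⟩ : ↥C) = ⟨c, hc⟩ := g.injective hj
            have hbl : blk j = c := congrArg Subtype.val this
            exact hbl ▸ mem_blk j
      · -- left inverse
        intro z hz
        rw [Finset.mem_filter] at hz
        funext i
        show z ((hne (blk i) (blk_mem i)).choose) = z i
        have hfi := fib_eq z hz.2 (blk i) (blk_mem i) i (mem_blk i)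
        have hall : ∀ x ∈ blk i, z x = z i := by
          intro x hx
          rw [hfi] at hx
          exact (Finset.mem_filter.mp hx).2
        exact hall _ (hne (blk i) (blk_mem i)).choose_spec
      · -- right inverse
        intro g _
        apply DFunLike.ext
        rintro ⟨c, hc⟩
        show g ⟨blk ((hne c hc).choose), blk_mem _⟩ = g ⟨c, hc⟩
        have e : (⟨blk ((hne c hc).choose), blk_mem _⟩ : ↥C) = ⟨c, hc⟩ :=
          Subtype.ext (blk_unique _ c hc (hne c hc).choose_spec).symm
        rw [e]
    rw [hcard, Finset.card_univ, Fintype.card_embedding_eq, Fintype.card_fin,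
      Fintype.card_coe]
  have hsum : ∑ z ∈ Finset.univ.filter (fun z : Fin n → Fin k => partOf z = C),
      (∏ h : Fin k, ascFac γ (Finset.univ.filter (fun i => z i = h)).card) /
        ascFac (γ * k) n
    = (k.descFactorial C.card : ℝ) *
        ((∏ c ∈ C, ascFac γ c.card) / ascFac (γ * k) n) := by
    rw [Finset.sum_congr rfl (fun z hz => by rw [hA z hz]), Finset.sum_const, hB,
      nsmul_eq_mul]
  rw [hsum, descFac_eq_descFactorial]
  ring
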